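/- Let π : X' → Y be a morphism of schemes, where X' is irreducible and separated. Let Z be a scheme and let j : Z → Y and j' : Z → X' be open immersions satisfying π ∘ j' = j. Then the set-theoretic preimage of j(Z) under π equals j'(Z); that is, π⁻¹(j(Z)) = j'(Z) as subsets of X'. (This claim is proved inside the proof of Definition–Proposition 7.4 of the paper, where it is used to compare compactifications: the section σ : j(Z) → π⁻¹(j(Z)) induced by j' is a closed immersion because π⁻¹(j(Z)) is separated, and its open image in the irreducible set π⁻¹(j(Z)) must therefore be everything.) -/

import Mathlib

open AlgebraicGeometry CategoryTheory

/-- Claim inside the proof of Definition–Proposition 7.4: given a morphism `π : X' ⟶ Y` with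
`X'` irreducible and separated, and open immersions `j : Z ⟶ Y`, `j' : Z ⟶ X'` with
`j' ≫ π = j`, the set-theoretic preimage of `j(Z)` under `π` equals `j'(Z)`. -/
theorem preimage_of_open_immersion_section {X' Y Z : Scheme}
    (π : X' ⟶ Y) (j : Z ⟶ Y) (j' : Z ⟶ X')
    [IsOpenImmersion j] [IsOpenImmersion j']
    [IrreducibleSpace X'] [X'.IsSeparated]
    (h : j' ≫ π = j) :
    π.base ⁻¹' (Set.range j.base) = Set.range j'.base := by
  classical
  -- first handle the case `Z` empty
  by_cases hZ : IsEmpty Z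
  · have h1 : Set.range j.base = ∅ := Set.range_eq_empty _
    have h2 : Set.range j'.base = ∅ := Set.range_eq_empty _
    simp [h1, h2]
  rw [not_isEmpty_iff] at hZ
  -- the open subscheme `U = π ⁻¹ (j(Z))` of `X'`
  set Uset : Set X' := π.base ⁻¹' (Set.range j.base) with hUset
  have hUopen : IsOpen Uset := by
    exact (j.isOpenEmbedding.isOpen_range).preimage π.base.hom.continuous
  let U : X'.Opens := ⟨Uset, hUopen⟩
  -- `j'` factors through `U`
  have hj'U : Set.range j'.base ⊆ Set.range U.ι.base := by
    rw [Scheme.Opens.range_ι]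
    rintro _ ⟨z, rfl⟩
    show π.base (j'.base z) ∈ Set.range j.base
    refine ⟨z, ?_⟩
    have := congrArg (fun f : Z ⟶ Y => f.base z) h
    simpa using this.symm
  let σ : Z ⟶ U.toScheme := IsOpenImmersion.lift U.ι j' hj'U
  have hσι : σ ≫ U.ι = j' := IsOpenImmersion.lift_fac _ _ hj'U
  -- `U.ι ≫ π` factors through `j`
  have hUπ : Set.range (U.ι ≫ π).base ⊆ Set.range j.base := by
    rintro _ ⟨u, rfl⟩
    simp only [Scheme.Hom.comp_base, TopCat.comp_app]
    exact u.2
  let p : U.toScheme ⟶ Z := IsOpenImmersion.lift j (U.ι ≫ π) hUπ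
  have hpj : p ≫ j = U.ι ≫ π := IsOpenImmersion.lift_fac _ _ hUπ
  -- `σ` is a section of `p`
  have hσp : σ ≫ p = 𝟙 Z := by
    rw [← cancel_mono j]
    rw [Category.assoc, hpj, ← Category.assoc, hσι, h, Category.id_comp]
  -- `U` is separated, so `p` is separated and `σ` is a closed immersion
  have hUsep : U.toScheme.IsSeparated := by
    constructor
    have : Limits.terminal.from U.toScheme =
        U.ι ≫ Limits.terminal.from X' := Limits.terminal.hom_ext _ _
    rw [this]
    infer_instance
  have hps : AlgebraicGeometry.IsSeparated p := inferInstance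
  have hcl : IsClosedImmersion σ := by
    have h1 : IsClosedImmersion (σ ≫ p) := by rw [hσp]; infer_instance
    exact IsClosedImmersion.of_comp σ p
  -- hence `range σ` is closed in `U`, so `range j'` is the intersection of `U` with a closed set
  have hclosed : IsClosed (Set.range σ.base) := hcl.base_closed.isClosed_range
  obtain ⟨C, hC, hCeq⟩ := (isClosed_induced_iff.mp hclosed)
  -- `range j' = Uset ∩ C`
  have hrange : Set.range j'.base = Uset ∩ C := by
    have : Set.range j'.base = U.ι.base '' Set.range σ.base := by
      rw [← hσι]
      simp [Set.range_comp]
    rw [this, ← hCeq]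
    show Subtype.val '' (Subtype.val ⁻¹' C) = Uset ∩ C
    rw [Set.image_preimage_eq_inter_range, Subtype.range_coe, Set.inter_comm]
    rfl
  -- `range j'` is a nonempty open, hence dense, hence `C = univ`
  have hdense : Dense (Set.range j'.base) :=
    (j'.isOpenEmbedding.isOpen_range).dense ⟨_, ⟨hZ.some, rfl⟩⟩
  have hCuniv : C = Set.univ := by
    apply Set.eq_univ_of_univ_subset
    calc Set.univ = closure (Set.range j'.base) := hdense.closure_eq.symm
      _ ⊆ closure C := closure_mono (by rw [hrange]; exact Set.inter_subset_right)
      _ = C := hC.closure_eq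
  rw [hrange, hCuniv, Set.inter_univ]
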